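/- Under the setting of the group-aware posterior odds factorization, for points x₀, x₁ and groups g₀, g₁ (with all relevant probabilities strictly between 0 and 1), ρ̄(x₁,g₁) > ρ̄(x₀,g₀) if and only if τ_r(x₁,x₀) > ω(g₀,π(x₀),g₁,π(x₁)), where τ_r(x₁,x₀) = r(x₁)/r(x₀) and ω(g,k,h,j) = OR(α^g_k, α_k)/OR(α^h_j, α_j). Likewise, ρ̄(x₁,g₁) = ρ̄(x₀,g₀) if and only if τ_r(x₁,x₀) = ω(g₀,π(x₀),g₁,π(x₁)). -/

import Mathlib

open scoped Classical

/-- Probability of an event under a mass function on `X × G × Bool`. -/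
noncomputable def prb {X G : Type*} [Fintype X] [Fintype G]
    (p : X × G × Bool → ℝ) (A : X × G × Bool → Prop) : ℝ :=
  ∑ z : X × G × Bool, if A z then p z else 0

/-- Conditional probability `p(A | B)`. -/
noncomputable def cnd {X G : Type*} [Fintype X] [Fintype G]
    (p : X × G × Bool → ℝ) (A B : X × G × Bool → Prop) : ℝ :=
  prb p (fun z => A z ∧ B z) / prb p B

/-- The odds ratio between probabilities `p` and `q`. -/
noncomputable def OR (p q : ℝ) : ℝ := (p / (1 - p)) / (q / (1 - q))

lemma prb_nonneg {X G : Type*} [Fintype X] [Fintype G]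
    (p : X × G × Bool → ℝ) (hnn : ∀ z, 0 ≤ p z) (A : X × G × Bool → Prop) :
    0 ≤ prb p A :=
  Finset.sum_nonneg fun z _ => by by_cases h : A z <;> simp [h, hnn z]

lemma prb_congr {X G : Type*} [Fintype X] [Fintype G]
    (p : X × G × Bool → ℝ) (A B : X × G × Bool → Prop) (h : ∀ z, A z ↔ B z) :
    prb p A = prb p B :=
  Finset.sum_congr rfl fun z _ => by
    by_cases hz : A z
    · rw [if_pos hz, if_pos ((h z).mp hz)]
    · rw [if_neg hz, if_neg fun hb => hz ((h z).mpr hb)]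

lemma prb_split {X G : Type*} [Fintype X] [Fintype G]
    (p : X × G × Bool → ℝ) (B : X × G × Bool → Prop) :
    prb p B = prb p (fun z => z.2.2 = true ∧ B z)
      + prb p (fun z => z.2.2 = false ∧ B z) := by
  unfold prb
  rw [← Finset.sum_add_distrib]
  refine Finset.sum_congr rfl fun z _ => ?_
  by_cases hB : B z
  · rcases Bool.eq_false_or_eq_true z.2.2 with h | h <;> simp [h, hB]
  · simp [hB]

lemma pos_of_ratio_Ioo {a b : ℝ} (ha : 0 ≤ a) (hb : 0 ≤ b)
    (h : a / (a + b) ∈ Set.Ioo (0:ℝ) 1) : 0 < a ∧ 0 < b := by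
  obtain ⟨h0, h1⟩ := h
  have hs : 0 < a + b := by
    rcases lt_or_eq_of_le (by linarith : (0:ℝ) ≤ a + b) with h | h
    · exact h
    · exfalso; rw [← h, div_zero] at h0; exact lt_irrefl 0 h0
  have hA : 0 < a := by
    have := (div_pos_iff.mp h0)
    rcases this with ⟨h', _⟩ | ⟨h', _⟩
    · exact h'
    · linarith
  exact ⟨hA, by linarith [(div_lt_one hs).mp h1]⟩

lemma pos_of_div_pos {a b : ℝ} (ha : 0 ≤ a) (h : 0 < a / b) : 0 < a ∧ 0 < b := by
  rcases div_pos_iff.mp h with ⟨h1, h2⟩ | ⟨h1, h2⟩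
  · exact ⟨h1, h2⟩
  · linarith

lemma key_alg (a1 a0 b1 b0 c1 c0 d1 d0 e1 e0 f1 f0 m1 m0 n1 n0 P1 P0 : ℝ)
    (hc1 : 0 < c1) (hc0 : 0 < c0) (hd1 : 0 < d1) (hd0 : 0 < d0)
    (he1 : 0 < e1) (he0 : 0 < e0) (hf1 : 0 < f1) (hf0 : 0 < f0)
    (hm1 : 0 < m1) (hm0 : 0 < m0) (hn1 : 0 < n1) (hn0 : 0 < n0)
    (hP1 : 0 < P1) (hP0 : 0 < P0)
    (hA1 : a1 * m1 = c1 * e1) (hA0 : a0 * m0 = c0 * e0)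
    (hB1 : b1 * n1 = d1 * f1) (hB0 : b0 * n0 = d0 * f0) :
    (a1 / (a1 + a0) > b1 / (b1 + b0) ↔
      (c1 / P1) / (c0 / P0) / ((d1 / P1) / (d0 / P0)) >
        OR (f1 / (f1 + f0)) (n1 / (n1 + n0)) / OR (e1 / (e1 + e0)) (m1 / (m1 + m0)))
    ∧ (a1 / (a1 + a0) = b1 / (b1 + b0) ↔
      (c1 / P1) / (c0 / P0) / ((d1 / P1) / (d0 / P0)) =
        OR (f1 / (f1 + f0)) (n1 / (n1 + n0)) / OR (e1 / (e1 + e0)) (m1 / (m1 + m0))) := by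
  have ha1 : 0 < a1 := by nlinarith [mul_pos hc1 he1]
  have ha0 : 0 < a0 := by nlinarith [mul_pos hc0 he0]
  have hb1 : 0 < b1 := by nlinarith [mul_pos hd1 hf1]
  have hb0 : 0 < b0 := by nlinarith [mul_pos hd0 hf0]
  have hτ : (c1 / P1) / (c0 / P0) / ((d1 / P1) / (d0 / P0)) = (c1 * d0) / (c0 * d1) := by
    field_simp
  have hω : OR (f1 / (f1 + f0)) (n1 / (n1 + n0)) / OR (e1 / (e1 + e0)) (m1 / (m1 + m0))
      = (f1 * n0 * (e0 * m1)) / (f0 * n1 * (e1 * m0)) := by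
    unfold OR
    have h1 : 1 - f1 / (f1 + f0) = f0 / (f1 + f0) := by field_simp; ring
    have h2 : 1 - n1 / (n1 + n0) = n0 / (n1 + n0) := by field_simp; ring
    have h3 : 1 - e1 / (e1 + e0) = e0 / (e1 + e0) := by field_simp; ring
    have h4 : 1 - m1 / (m1 + m0) = m0 / (m1 + m0) := by field_simp; ring
    rw [h1, h2, h3, h4]
    field_simp
  have e1' : a1 * b0 * (m1 * n0 * m0 * n1) = c1 * e1 * d0 * f0 * (m0 * n1) := by
    linear_combination (m0 * n1 * b0 * n0) * hA1 + (m0 * n1 * c1 * e1) * hB0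
  have e0' : a0 * b1 * (m1 * n0 * m0 * n1) = c0 * e0 * d1 * f1 * (m1 * n0) := by
    linear_combination (m1 * n0 * b1 * n1) * hA0 + (m1 * n0 * c0 * e0) * hB1
  have hCpos : (0:ℝ) < m1 * n0 * m0 * n1 := by positivity
  rw [hτ, hω]
  constructor
  · rw [gt_iff_lt, gt_iff_lt, div_lt_div_iff₀ (by positivity) (by positivity),
      div_lt_div_iff₀ (by positivity) (by positivity)]
    constructor
    · intro h
      have hstep : a0 * b1 < a1 * b0 := by linarith [h]
      have hstep2 : a0 * b1 * (m1 * n0 * m0 * n1) < a1 * b0 * (m1 * n0 * m0 * n1) :=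
        mul_lt_mul_of_pos_right hstep hCpos
      linarith [hstep2, e1', e0']
    · intro h
      have hstep2 : a0 * b1 * (m1 * n0 * m0 * n1) < a1 * b0 * (m1 * n0 * m0 * n1) := by
        linarith [e1', e0', h]
      have hstep : a0 * b1 < a1 * b0 := lt_of_mul_lt_mul_right (by linarith) (le_of_lt hCpos)
      linarith [hstep]
  · rw [div_eq_div_iff (by positivity) (by positivity),
      div_eq_div_iff (by positivity) (by positivity)]
    constructor
    · intro h
      have hstep : a1 * b0 = a0 * b1 := by linear_combination h
      linear_combination (m1 * n0 * m0 * n1) * hstep - e1' + e0'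
    · intro h
      have hstep : a1 * b0 = a0 * b1 :=
        mul_right_cancel₀ (ne_of_gt hCpos) (by linear_combination e1' - e0' + h)
      linear_combination hstep

/-- Under PCC-invariance, the group-aware posterior ranks `(x₁,g₁)` above `(x₀,g₀)` iff
the density ratio gap `τ_r(x₁,x₀)` exceeds the odds-ratio gap `ω(g₀,π(x₀),g₁,π(x₁))`,
with equality characterizing ties. -/
theorem group_aware_posterior_ranking {X G P : Type*}
    [Fintype X] [Fintype G] (π : X → P)
    (p : X × G × Bool → ℝ) (hnn : ∀ z, 0 ≤ p z) (hsum : ∑ z, p z = 1)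
    (hpcc : ∀ (x : X) (y : Bool) (g : G),
      0 < prb p (fun z => z.2.2 = y ∧ z.2.1 = g ∧ π z.1 = π x) →
      cnd p (fun z => z.1 = x) (fun z => z.2.2 = y ∧ z.2.1 = g ∧ π z.1 = π x)
        = cnd p (fun z => z.1 = x) (fun z => z.2.2 = y ∧ π z.1 = π x))
    (x₀ x₁ : X) (g₀ g₁ : G)
    (hxg₀ : 0 < prb p (fun z => z.1 = x₀ ∧ z.2.1 = g₀))
    (hxg₁ : 0 < prb p (fun z => z.1 = x₁ ∧ z.2.1 = g₁))
    (hαk₀ : cnd p (fun z => z.2.2 = true) (fun z => π z.1 = π x₀) ∈ Set.Ioo (0:ℝ) 1)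
    (hαk₁ : cnd p (fun z => z.2.2 = true) (fun z => π z.1 = π x₁) ∈ Set.Ioo (0:ℝ) 1)
    (hαgk₀ : cnd p (fun z => z.2.2 = true) (fun z => z.2.1 = g₀ ∧ π z.1 = π x₀)
      ∈ Set.Ioo (0:ℝ) 1)
    (hαgk₁ : cnd p (fun z => z.2.2 = true) (fun z => z.2.1 = g₁ ∧ π z.1 = π x₁)
      ∈ Set.Ioo (0:ℝ) 1)
    (hfp₀ : 0 < cnd p (fun z => z.1 = x₀) (fun z => z.2.2 = true))
    (hfm₀ : 0 < cnd p (fun z => z.1 = x₀) (fun z => z.2.2 = false))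
    (hfp₁ : 0 < cnd p (fun z => z.1 = x₁) (fun z => z.2.2 = true))
    (hfm₁ : 0 < cnd p (fun z => z.1 = x₁) (fun z => z.2.2 = false)) :
    (cnd p (fun z => z.2.2 = true) (fun z => z.1 = x₁ ∧ z.2.1 = g₁)
        > cnd p (fun z => z.2.2 = true) (fun z => z.1 = x₀ ∧ z.2.1 = g₀)
      ↔ (cnd p (fun z => z.1 = x₁) (fun z => z.2.2 = true)
            / cnd p (fun z => z.1 = x₁) (fun z => z.2.2 = false))
          / (cnd p (fun z => z.1 = x₀) (fun z => z.2.2 = true)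
            / cnd p (fun z => z.1 = x₀) (fun z => z.2.2 = false))
        > OR (cnd p (fun z => z.2.2 = true) (fun z => z.2.1 = g₀ ∧ π z.1 = π x₀))
             (cnd p (fun z => z.2.2 = true) (fun z => π z.1 = π x₀))
          / OR (cnd p (fun z => z.2.2 = true) (fun z => z.2.1 = g₁ ∧ π z.1 = π x₁))
               (cnd p (fun z => z.2.2 = true) (fun z => π z.1 = π x₁)))
    ∧ (cnd p (fun z => z.2.2 = true) (fun z => z.1 = x₁ ∧ z.2.1 = g₁)
        = cnd p (fun z => z.2.2 = true) (fun z => z.1 = x₀ ∧ z.2.1 = g₀)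
      ↔ (cnd p (fun z => z.1 = x₁) (fun z => z.2.2 = true)
            / cnd p (fun z => z.1 = x₁) (fun z => z.2.2 = false))
          / (cnd p (fun z => z.1 = x₀) (fun z => z.2.2 = true)
            / cnd p (fun z => z.1 = x₀) (fun z => z.2.2 = false))
        = OR (cnd p (fun z => z.2.2 = true) (fun z => z.2.1 = g₀ ∧ π z.1 = π x₀))
             (cnd p (fun z => z.2.2 = true) (fun z => π z.1 = π x₀))
          / OR (cnd p (fun z => z.2.2 = true) (fun z => z.2.1 = g₁ ∧ π z.1 = π x₁))
               (cnd p (fun z => z.2.2 = true) (fun z => π z.1 = π x₁))) := by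
  
  -- splits
  have hsA : prb p (fun z => z.1 = x₁ ∧ z.2.1 = g₁) = prb p (fun z => z.2.2 = true ∧ z.1 = x₁ ∧ z.2.1 = g₁) + prb p (fun z => z.2.2 = false ∧ z.1 = x₁ ∧ z.2.1 = g₁) := prb_split p _
  have hsB : prb p (fun z => z.1 = x₀ ∧ z.2.1 = g₀) = prb p (fun z => z.2.2 = true ∧ z.1 = x₀ ∧ z.2.1 = g₀) + prb p (fun z => z.2.2 = false ∧ z.1 = x₀ ∧ z.2.1 = g₀) := prb_split p _
  have hsE : prb p (fun z => z.2.1 = g₁ ∧ π z.1 = π x₁) = prb p (fun z => z.2.2 = true ∧ z.2.1 = g₁ ∧ π z.1 = π x₁) + prb p (fun z => z.2.2 = false ∧ z.2.1 = g₁ ∧ π z.1 = π x₁) := prb_split p _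
  have hsF : prb p (fun z => z.2.1 = g₀ ∧ π z.1 = π x₀) = prb p (fun z => z.2.2 = true ∧ z.2.1 = g₀ ∧ π z.1 = π x₀) + prb p (fun z => z.2.2 = false ∧ z.2.1 = g₀ ∧ π z.1 = π x₀) := prb_split p _
  have hsM : prb p (fun z => π z.1 = π x₁) = prb p (fun z => z.2.2 = true ∧ π z.1 = π x₁) + prb p (fun z => z.2.2 = false ∧ π z.1 = π x₁) := prb_split p _
  have hsN : prb p (fun z => π z.1 = π x₀) = prb p (fun z => z.2.2 = true ∧ π z.1 = π x₀) + prb p (fun z => z.2.2 = false ∧ π z.1 = π x₀) := prb_split p _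
  -- positivity from Ioo hypotheses
  have hM : 0 < prb p (fun z => z.2.2 = true ∧ π z.1 = π x₁) ∧ 0 < prb p (fun z => z.2.2 = false ∧ π z.1 = π x₁) := by
    have h := hαk₁
    simp only [cnd, hsM] at h
    exact pos_of_ratio_Ioo (prb_nonneg p hnn _) (prb_nonneg p hnn _) h
  have hN : 0 < prb p (fun z => z.2.2 = true ∧ π z.1 = π x₀) ∧ 0 < prb p (fun z => z.2.2 = false ∧ π z.1 = π x₀) := by
    have h := hαk₀
    simp only [cnd, hsN] at h
    exact pos_of_ratio_Ioo (prb_nonneg p hnn _) (prb_nonneg p hnn _) h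
  have hE : 0 < prb p (fun z => z.2.2 = true ∧ z.2.1 = g₁ ∧ π z.1 = π x₁) ∧ 0 < prb p (fun z => z.2.2 = false ∧ z.2.1 = g₁ ∧ π z.1 = π x₁) := by
    have h := hαgk₁
    simp only [cnd, hsE] at h
    exact pos_of_ratio_Ioo (prb_nonneg p hnn _) (prb_nonneg p hnn _) h
  have hF : 0 < prb p (fun z => z.2.2 = true ∧ z.2.1 = g₀ ∧ π z.1 = π x₀) ∧ 0 < prb p (fun z => z.2.2 = false ∧ z.2.1 = g₀ ∧ π z.1 = π x₀) := by
    have h := hαgk₀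
    simp only [cnd, hsF] at h
    exact pos_of_ratio_Ioo (prb_nonneg p hnn _) (prb_nonneg p hnn _) h
  have hC1 : 0 < prb p (fun z => z.1 = x₁ ∧ z.2.2 = true) ∧ 0 < prb p (fun z => z.2.2 = true) := by
    have h := hfp₁; simp only [cnd] at h
    exact pos_of_div_pos (prb_nonneg p hnn _) h
  have hC0 : 0 < prb p (fun z => z.1 = x₁ ∧ z.2.2 = false) ∧ 0 < prb p (fun z => z.2.2 = false) := by
    have h := hfm₁; simp only [cnd] at h
    exact pos_of_div_pos (prb_nonneg p hnn _) h
  have hD1 : 0 < prb p (fun z => z.1 = x₀ ∧ z.2.2 = true) := by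
    have h := hfp₀; simp only [cnd] at h
    exact (pos_of_div_pos (prb_nonneg p hnn _) h).1
  have hD0 : 0 < prb p (fun z => z.1 = x₀ ∧ z.2.2 = false) := by
    have h := hfm₀; simp only [cnd] at h
    exact (pos_of_div_pos (prb_nonneg p hnn _) h).1
  have hcg₁true : prb p (fun z => z.1 = x₁ ∧ z.2.2 = true ∧ z.2.1 = g₁ ∧ π z.1 = π x₁) = prb p (fun z => z.2.2 = true ∧ z.1 = x₁ ∧ z.2.1 = g₁) := by
    refine prb_congr p _ _ fun z => ?_
    constructor
    · rintro ⟨h1, h2, h3, _⟩; exact ⟨h2, h1, h3⟩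
    · rintro ⟨h2, h1, h3⟩; exact ⟨h1, h2, h3, by rw [h1]⟩
  have hcc₁true : prb p (fun z => z.1 = x₁ ∧ z.2.2 = true ∧ π z.1 = π x₁) = prb p (fun z => z.1 = x₁ ∧ z.2.2 = true) := by
    refine prb_congr p _ _ fun z => ?_
    constructor
    · rintro ⟨h1, h2, _⟩; exact ⟨h1, h2⟩
    · rintro ⟨h1, h2⟩; exact ⟨h1, h2, by rw [h1]⟩
  have hcg₁false : prb p (fun z => z.1 = x₁ ∧ z.2.2 = false ∧ z.2.1 = g₁ ∧ π z.1 = π x₁) = prb p (fun z => z.2.2 = false ∧ z.1 = x₁ ∧ z.2.1 = g₁) := by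
    refine prb_congr p _ _ fun z => ?_
    constructor
    · rintro ⟨h1, h2, h3, _⟩; exact ⟨h2, h1, h3⟩
    · rintro ⟨h2, h1, h3⟩; exact ⟨h1, h2, h3, by rw [h1]⟩
  have hcc₁false : prb p (fun z => z.1 = x₁ ∧ z.2.2 = false ∧ π z.1 = π x₁) = prb p (fun z => z.1 = x₁ ∧ z.2.2 = false) := by
    refine prb_congr p _ _ fun z => ?_
    constructor
    · rintro ⟨h1, h2, _⟩; exact ⟨h1, h2⟩
    · rintro ⟨h1, h2⟩; exact ⟨h1, h2, by rw [h1]⟩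
  have hcg₀true : prb p (fun z => z.1 = x₀ ∧ z.2.2 = true ∧ z.2.1 = g₀ ∧ π z.1 = π x₀) = prb p (fun z => z.2.2 = true ∧ z.1 = x₀ ∧ z.2.1 = g₀) := by
    refine prb_congr p _ _ fun z => ?_
    constructor
    · rintro ⟨h1, h2, h3, _⟩; exact ⟨h2, h1, h3⟩
    · rintro ⟨h2, h1, h3⟩; exact ⟨h1, h2, h3, by rw [h1]⟩
  have hcc₀true : prb p (fun z => z.1 = x₀ ∧ z.2.2 = true ∧ π z.1 = π x₀) = prb p (fun z => z.1 = x₀ ∧ z.2.2 = true) := by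
    refine prb_congr p _ _ fun z => ?_
    constructor
    · rintro ⟨h1, h2, _⟩; exact ⟨h1, h2⟩
    · rintro ⟨h1, h2⟩; exact ⟨h1, h2, by rw [h1]⟩
  have hcg₀false : prb p (fun z => z.1 = x₀ ∧ z.2.2 = false ∧ z.2.1 = g₀ ∧ π z.1 = π x₀) = prb p (fun z => z.2.2 = false ∧ z.1 = x₀ ∧ z.2.1 = g₀) := by
    refine prb_congr p _ _ fun z => ?_
    constructor
    · rintro ⟨h1, h2, h3, _⟩; exact ⟨h2, h1, h3⟩
    · rintro ⟨h2, h1, h3⟩; exact ⟨h1, h2, h3, by rw [h1]⟩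
  have hcc₀false : prb p (fun z => z.1 = x₀ ∧ z.2.2 = false ∧ π z.1 = π x₀) = prb p (fun z => z.1 = x₀ ∧ z.2.2 = false) := by
    refine prb_congr p _ _ fun z => ?_
    constructor
    · rintro ⟨h1, h2, _⟩; exact ⟨h1, h2⟩
    · rintro ⟨h1, h2⟩; exact ⟨h1, h2, by rw [h1]⟩
  have hA1eq : prb p (fun z => z.2.2 = true ∧ z.1 = x₁ ∧ z.2.1 = g₁) * prb p (fun z => z.2.2 = true ∧ π z.1 = π x₁) = prb p (fun z => z.1 = x₁ ∧ z.2.2 = true) * prb p (fun z => z.2.2 = true ∧ z.2.1 = g₁ ∧ π z.1 = π x₁) := by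
    have h := hpcc x₁ true g₁ hE.1
    simp only [cnd] at h
    rw [hcg₁true, hcc₁true] at h
    exact (div_eq_div_iff (ne_of_gt hE.1) (ne_of_gt hM.1)).mp h
  have hA0eq : prb p (fun z => z.2.2 = false ∧ z.1 = x₁ ∧ z.2.1 = g₁) * prb p (fun z => z.2.2 = false ∧ π z.1 = π x₁) = prb p (fun z => z.1 = x₁ ∧ z.2.2 = false) * prb p (fun z => z.2.2 = false ∧ z.2.1 = g₁ ∧ π z.1 = π x₁) := by
    have h := hpcc x₁ false g₁ hE.2
    simp only [cnd] at h
    rw [hcg₁false, hcc₁false] at h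
    exact (div_eq_div_iff (ne_of_gt hE.2) (ne_of_gt hM.2)).mp h
  have hB1eq : prb p (fun z => z.2.2 = true ∧ z.1 = x₀ ∧ z.2.1 = g₀) * prb p (fun z => z.2.2 = true ∧ π z.1 = π x₀) = prb p (fun z => z.1 = x₀ ∧ z.2.2 = true) * prb p (fun z => z.2.2 = true ∧ z.2.1 = g₀ ∧ π z.1 = π x₀) := by
    have h := hpcc x₀ true g₀ hF.1
    simp only [cnd] at h
    rw [hcg₀true, hcc₀true] at h
    exact (div_eq_div_iff (ne_of_gt hF.1) (ne_of_gt hN.1)).mp h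
  have hB0eq : prb p (fun z => z.2.2 = false ∧ z.1 = x₀ ∧ z.2.1 = g₀) * prb p (fun z => z.2.2 = false ∧ π z.1 = π x₀) = prb p (fun z => z.1 = x₀ ∧ z.2.2 = false) * prb p (fun z => z.2.2 = false ∧ z.2.1 = g₀ ∧ π z.1 = π x₀) := by
    have h := hpcc x₀ false g₀ hF.2
    simp only [cnd] at h
    rw [hcg₀false, hcc₀false] at h
    exact (div_eq_div_iff (ne_of_gt hF.2) (ne_of_gt hN.2)).mp h
  simp only [cnd]
  rw [hsA, hsB, hsM, hsN, hsE, hsF]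
  exact key_alg _ _ _ _ _ _ _ _ _ _ _ _ _ _ _ _ _ _
    hC1.1 hC0.1 hD1 hD0 hE.1 hE.2 hF.1 hF.2 hM.1 hM.2 hN.1 hN.2 hC1.2 hC0.2
    hA1eq hA0eq hB1eq hB0eq
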